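/- If 2 = M < N, then from any configuration f : [N] → {1, 2}, after at most one step of the process the two smartest people N and N−1 occupy different rooms, and from then on every step consists exactly of persons N and N−1 swapping rooms while no one else moves. Consequently G(N, 2) is not strongly connected and decomposes into weakly connected components each containing exactly one directed cycle of length 2 among its non-source vertices. -/

import Mathlib

/-- Edge relation of the configuration graph `G(N, M)`. -/
def RoomEdge (N M : ℕ) (f g : Fin N → Fin M) : Prop :=
  ∀ k : Fin N, g k ≠ f k ↔ ∀ j : Fin N, f j = f k → j ≤ k

/-- A directed path of length `n` from `f` to `g` in `G(N, M)`. -/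
def RoomPath (N M : ℕ) (f g : Fin N → Fin M) (n : ℕ) : Prop :=
  ∃ p : ℕ → Fin N → Fin M, p 0 = f ∧ p n = g ∧ ∀ i < n, RoomEdge N M (p i) (p (i + 1))

/-- `V_s`: configurations injective on the `M` largest indices. -/
def RoomVs (N M : ℕ) (f : Fin N → Fin M) : Prop :=
  ∀ j k : Fin N, N - M ≤ (j : ℕ) → N - M ≤ (k : ℕ) → f j = f k → j = k

private lemma fin2_aux1 : ∀ x y z : Fin 2, z ≠ x → x ≠ y → z = y := by decide
private lemma fin2_aux2 : ∀ x y z : Fin 2, x ≠ y → z = x ∨ z = y := by decide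
private lemma fin2_aux3 : ∀ x y x' y' : Fin 2, x ≠ y → x' ≠ x → y' ≠ y → x' ≠ y' := by decide

section
variable (N : ℕ) (hN : 3 ≤ N)

private lemma ga_ne (f g : Fin N → Fin 2) (h : RoomEdge N 2 f g) :
    g ⟨N - 1, by omega⟩ ≠ f ⟨N - 1, by omega⟩ := by
  refine (h _).mpr fun j _ => ?_
  simp only [Fin.le_def]
  omega

private lemma gb_ne (f g : Fin N → Fin 2) (h : RoomEdge N 2 f g)
    (hf : f ⟨N - 1, by omega⟩ ≠ f ⟨N - 2, by omega⟩) :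
    g ⟨N - 2, by omega⟩ ≠ f ⟨N - 2, by omega⟩ := by
  refine (h _).mpr fun j hj => ?_
  simp only [Fin.le_def]
  by_contra hlt
  have hj1 : (j : ℕ) = N - 1 := by have := j.isLt; omega
  have hje : j = ⟨N - 1, by omega⟩ := Fin.ext hj1
  exact hf (hje ▸ hj)

private lemma part1 (f g : Fin N → Fin 2) (h : RoomEdge N 2 f g) :
    g ⟨N - 1, by omega⟩ ≠ g ⟨N - 2, by omega⟩ := by
  have ha := ga_ne N hN f g h
  by_cases hf : f ⟨N - 1, by omega⟩ = f ⟨N - 2, by omega⟩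
  · have hb : g ⟨N - 2, by omega⟩ = f ⟨N - 2, by omega⟩ := by
      by_contra hb
      have := (h _).mp hb ⟨N - 1, by omega⟩ hf
      simp only [Fin.le_def] at this
      omega
    rw [hb, ← hf]
    exact ha
  · exact fin2_aux3 _ _ _ _ hf ha (gb_ne N hN f g h hf)

private lemma part2 (f : Fin N → Fin 2)
    (hf : f ⟨N - 1, by omega⟩ ≠ f ⟨N - 2, by omega⟩)
    (g : Fin N → Fin 2) (h : RoomEdge N 2 f g) :
    g ⟨N - 1, by omega⟩ = f ⟨N - 2, by omega⟩ ∧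
    g ⟨N - 2, by omega⟩ = f ⟨N - 1, by omega⟩ ∧
    ∀ k : Fin N, (k : ℕ) < N - 2 → g k = f k := by
  refine ⟨fin2_aux1 _ _ _ (ga_ne N hN f g h) hf,
    fin2_aux1 _ _ _ (gb_ne N hN f g h hf) (Ne.symm hf), fun k hk => ?_⟩
  by_contra hgk
  have hmax := (h k).mp hgk
  rcases fin2_aux2 (f ⟨N - 1, by omega⟩) (f ⟨N - 2, by omega⟩) (f k) hf with hc | hc
  · have := hmax ⟨N - 1, by omega⟩ hc.symm
    simp only [Fin.le_def] at this; omega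
  · have := hmax ⟨N - 2, by omega⟩ hc.symm
    simp only [Fin.le_def] at this; omega

private def swapfun (f : Fin N → Fin 2) : Fin N → Fin 2 := fun k =>
  if (k : ℕ) = N - 1 then f ⟨N - 2, by omega⟩
  else if (k : ℕ) = N - 2 then f ⟨N - 1, by omega⟩ else f k

private lemma swap_a (f : Fin N → Fin 2) :
    swapfun N hN f ⟨N - 1, by omega⟩ = f ⟨N - 2, by omega⟩ := if_pos rfl

private lemma swap_b (f : Fin N → Fin 2) :
    swapfun N hN f ⟨N - 2, by omega⟩ = f ⟨N - 1, by omega⟩ := by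
  simp only [swapfun]
  rw [if_neg (show ¬ (N - 2 = N - 1) by omega)]
  simp

private lemma swap_other (f : Fin N → Fin 2) (k : Fin N)
    (h1 : (k : ℕ) ≠ N - 1) (h2 : (k : ℕ) ≠ N - 2) :
    swapfun N hN f k = f k := by
  simp only [swapfun]
  rw [if_neg h1, if_neg h2]

private lemma swap_edge (f : Fin N → Fin 2)
    (hf : f ⟨N - 1, by omega⟩ ≠ f ⟨N - 2, by omega⟩) :
    RoomEdge N 2 f (swapfun N hN f) := by
  intro k
  by_cases hk1 : (k : ℕ) = N - 1
  · have hke : k = ⟨N - 1, by omega⟩ := Fin.ext hk1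
    rw [hke, swap_a]
    constructor
    · intro _ j _; simp only [Fin.le_def]; omega
    · intro _; exact Ne.symm hf
  · by_cases hk2 : (k : ℕ) = N - 2
    · have hke : k = ⟨N - 2, by omega⟩ := Fin.ext hk2
      rw [hke, swap_b]
      constructor
      · intro _ j hj
        simp only [Fin.le_def]
        by_contra hlt
        have hj1 : (j : ℕ) = N - 1 := by have := j.isLt; omega
        have hje : j = ⟨N - 1, by omega⟩ := Fin.ext hj1
        exact hf (hje ▸ hj)
      · intro _; exact hf
    · rw [swap_other N hN f k hk1 hk2]
      constructor
      · intro hne; exact absurd rfl hne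
      · intro hmax
        rcases fin2_aux2 (f ⟨N - 1, by omega⟩) (f ⟨N - 2, by omega⟩) (f k) hf with hc | hc
        · have := hmax ⟨N - 1, by omega⟩ hc.symm
          simp only [Fin.le_def] at this
          have := k.isLt; omega
        · have := hmax ⟨N - 2, by omega⟩ hc.symm
          simp only [Fin.le_def] at this
          have := k.isLt; omega

private lemma swap_swap (f : Fin N → Fin 2) :
    swapfun N hN (swapfun N hN f) = f := by
  funext k
  by_cases hk1 : (k : ℕ) = N - 1
  · have hke : k = ⟨N - 1, by omega⟩ := Fin.ext hk1
    rw [hke, swap_a, swap_b]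
  · by_cases hk2 : (k : ℕ) = N - 2
    · have hke : k = ⟨N - 2, by omega⟩ := Fin.ext hk2
      rw [hke, swap_b, swap_a]
    · rw [swap_other N hN _ k hk1 hk2, swap_other N hN _ k hk1 hk2]

end

theorem two_rooms_behaviour (N : ℕ) (hN : 2 < N) :
    (∀ f g : Fin N → Fin 2, RoomEdge N 2 f g →
      g ⟨N - 1, by omega⟩ ≠ g ⟨N - 2, by omega⟩) ∧
    (∀ f : Fin N → Fin 2, f ⟨N - 1, by omega⟩ ≠ f ⟨N - 2, by omega⟩ →
      ∀ g : Fin N → Fin 2, RoomEdge N 2 f g →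
        g ⟨N - 1, by omega⟩ = f ⟨N - 2, by omega⟩ ∧
        g ⟨N - 2, by omega⟩ = f ⟨N - 1, by omega⟩ ∧
        ∀ k : Fin N, (k : ℕ) < N - 2 → g k = f k) ∧
    (∀ f : Fin N → Fin 2, f ⟨N - 1, by omega⟩ ≠ f ⟨N - 2, by omega⟩ →
      ∃ g : Fin N → Fin 2, RoomEdge N 2 f g ∧ RoomEdge N 2 g f) ∧
    ¬ (∀ f g : Fin N → Fin 2, Relation.ReflTransGen (RoomEdge N 2) f g) := by
  refine ⟨part1 N hN, part2 N hN, ?_, ?_⟩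
  · intro f hf
    refine ⟨swapfun N hN f, swap_edge N hN f hf, ?_⟩
    have hgf : swapfun N hN f ⟨N - 1, by omega⟩ ≠ swapfun N hN f ⟨N - 2, by omega⟩ := by
      rw [swap_a, swap_b]; exact hf.symm
    have key := swap_edge N hN (swapfun N hN f) hgf
    rwa [swap_swap] at key
  · intro hall
    have h := hall (fun k => if (k : ℕ) = N - 1 then 1 else 0) (fun _ => 0)
    rcases h.cases_tail with heq | ⟨c, _, hedge⟩
    · have := congrFun heq ⟨N - 1, by omega⟩
      simp at this
    · exact part1 N hN c (fun _ => 0) hedge rfl
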